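/- arXiv:2106.06653 — 2 statements merged into one kernel-verified Lean document; each statement's English description precedes it below -/
import Mathlib

section
/- Let x, y be real with y ≤ √3/4 and |x| ≤ 1/8 + (√3/2)y (so that ρ^GS(x,y) is a density matrix), and let ρ^Γ denote the partial transpose of ρ^GS(x,y) with respect to the third tensor factor. Then ρ^Γ is positive semidefinite if and only if |x| + y/(2√3) ≤ 1/8; moreover ρ^Γ has at most one negative eigenvalue, and the sum of the absolute values of the negative eigenvalues of ρ^Γ (the negativity) equals max{0, |x| + y/(2√3) − 1/8}. -/
open Matrix
open scoped ComplexOrder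

noncomputable section

/-- Three-qubit index. -/
abbrev Q3 := Fin 2 × Fin 2 × Fin 2

/-- `|GHZ⁺⟩ = (|000⟩+|111⟩)/√2`. -/
def GHZp : Q3 → ℂ := fun v =>
  if v = (0, 0, 0) then (1 / Real.sqrt 2 : ℝ)
  else if v = (1, 1, 1) then (1 / Real.sqrt 2 : ℝ)
  else 0

/-- `|GHZ⁻⟩ = (|000⟩−|111⟩)/√2`. -/
def GHZm : Q3 → ℂ := fun v =>
  if v = (0, 0, 0) then (1 / Real.sqrt 2 : ℝ)
  else if v = (1, 1, 1) then -(1 / Real.sqrt 2 : ℝ)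
  else 0

/-- The GHZ-symmetric matrix
`ρ^GS(x,y) = (2y/√3 + x)|GHZ⁺⟩⟨GHZ⁺| + (2y/√3 − x)|GHZ⁻⟩⟨GHZ⁻| + ((√3−4y)/(8√3))·I₈`. -/
def rhoGS (x y : ℝ) : Matrix Q3 Q3 ℂ :=
  ((2 * y / Real.sqrt 3 + x : ℝ) : ℂ) • vecMulVec GHZp (star GHZp) +
  ((2 * y / Real.sqrt 3 - x : ℝ) : ℂ) • vecMulVec GHZm (star GHZm) +
  (((Real.sqrt 3 - 4 * y) / (8 * Real.sqrt 3) : ℝ) : ℂ) • (1 : Matrix Q3 Q3 ℂ)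

/-- Partial transpose with respect to the third qubit:
`|i j k⟩⟨i' j' k'| ↦ |i j k'⟩⟨i' j' k|`. -/
def ptranspose3 (ρ : Matrix Q3 Q3 ℂ) : Matrix Q3 Q3 ℂ := fun v w =>
  ρ (v.1, v.2.1, w.2.2) (w.1, w.2.1, v.2.2)


/-! ### Auxiliary machinery -/

open Polynomial in
lemma charpoly_conj' {n : Type*} [Fintype n] [DecidableEq n] {R : Type*} [CommRing R]
    (P Q M : Matrix n n R) (hPQ : P * Q = 1) :
    (P * M * Q).charpoly = M.charpoly := by
  have hmap : (C : R →+* R[X]).mapMatrix (P * Q) = 1 := by rw [hPQ]; simp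
  have comm := fun A : Matrix n n R[X] =>
    (scalar_commute (X : R[X]) (fun r' => Commute.all _ _) A).eq
  have hcm : charmatrix (P * M * Q) =
      (C : R →+* R[X]).mapMatrix P * charmatrix M * (C : R →+* R[X]).mapMatrix Q := by
    unfold charmatrix
    rw [mul_sub, sub_mul, _root_.map_mul, _root_.map_mul]
    congr 1
    rw [mul_assoc, comm, ← mul_assoc, ← _root_.map_mul, hPQ]
    simp
  have hdet : ((C : R →+* R[X]).mapMatrix P).det * ((C : R →+* R[X]).mapMatrix Q).det = 1 := by
    rw [← det_mul, ← _root_.map_mul, hPQ]; simp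
  rw [charpoly, hcm, det_mul, det_mul, charpoly]
  ring_nf
  rw [mul_comm, ← mul_assoc, mul_comm (((C : R →+* R[X]).mapMatrix Q).det), hdet, one_mul]

open Polynomial in
lemma charpoly_diag' {n : Type*} [Fintype n] [DecidableEq n] {R : Type*} [CommRing R]
    (f : n → R) : (diagonal f).charpoly = ∏ i, (X - C (f i)) := by
  rw [charpoly]
  have : charmatrix (diagonal f) = diagonal (fun i => X - C (f i)) := by
    ext i j
    by_cases h : i = j
    · subst h; simp [charmatrix_apply_eq]
    · simp [charmatrix_apply_ne _ _ _ h, diagonal_apply_ne _ h]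
  rw [this, det_diagonal]

open Polynomial in
lemma roots_eq {n : Type*} [Fintype n] [DecidableEq n]
    (f g : n → ℂ) (h : ∏ i, (X - C (f i)) = ∏ i, (X - C (g i))) :
    Finset.univ.val.map f = Finset.univ.val.map g := by
  have key : ∀ u : n → ℂ,
      ∏ i, (X - C (u i)) = ((Finset.univ.val.map u).map (fun a => X - C a)).prod := by
    intro u
    rw [Multiset.map_map, Finset.prod_eq_multiset_prod]
    rfl
  have h' := h
  rw [key f, key g] at h'
  have h2 := congrArg Polynomial.roots h'
  rwa [roots_multiset_prod_X_sub_C, roots_multiset_prod_X_sub_C] at h2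

/-- The diagonal entries of the diagonalized partial transpose. -/
def dvec (x y : ℝ) : Q3 → ℝ := fun v =>
  if v = (0,0,0) then (Real.sqrt 3 - 4*y)/(8*Real.sqrt 3) + 2*y/Real.sqrt 3
  else if v = (1,1,1) then (Real.sqrt 3 - 4*y)/(8*Real.sqrt 3) + 2*y/Real.sqrt 3
  else if v = (0,0,1) then (Real.sqrt 3 - 4*y)/(8*Real.sqrt 3) + x
  else if v = (1,1,0) then (Real.sqrt 3 - 4*y)/(8*Real.sqrt 3) - x
  else (Real.sqrt 3 - 4*y)/(8*Real.sqrt 3)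

/-- The (real, symmetric, orthogonal) diagonalizing matrix. -/
def Vmat : Matrix Q3 Q3 ℂ := fun v w =>
  if v = (0,0,1) then
    (if w = (0,0,1) then (((Real.sqrt 2)⁻¹ : ℝ) : ℂ) else
      if w = (1,1,0) then (((Real.sqrt 2)⁻¹ : ℝ) : ℂ) else 0)
  else if v = (1,1,0) then
    (if w = (0,0,1) then (((Real.sqrt 2)⁻¹ : ℝ) : ℂ) else
      if w = (1,1,0) then -(((Real.sqrt 2)⁻¹ : ℝ) : ℂ) else 0)
  else if v = w then 1 else 0

lemma hs2c' : ((Real.sqrt 2 : ℝ) : ℂ)⁻¹ * ((Real.sqrt 2 : ℝ) : ℂ)⁻¹ = 1/2 := by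
  have h : (Real.sqrt 2)⁻¹ * (Real.sqrt 2)⁻¹ = 1/2 := by
    rw [← mul_inv, Real.mul_self_sqrt] <;> norm_num
  rw [← Complex.ofReal_inv, ← Complex.ofReal_mul, h]
  norm_num

lemma hs2sq : ((Real.sqrt 2 : ℝ) : ℂ)⁻¹ ^ 2 = 1/2 := by
  rw [sq, hs2c']

set_option maxHeartbeats 2000000 in
lemma Vmat_mul_self : Vmat * Vmat = 1 := by
  ext ⟨i, j, k⟩ ⟨i', j', k'⟩
  fin_cases i <;> fin_cases j <;> fin_cases k <;> fin_cases i' <;> fin_cases j' <;> fin_cases k' <;>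
  · rw [mul_apply, Fintype.sum_prod_type]
    simp only [Fintype.sum_prod_type, Fin.sum_univ_two]
    norm_num [Vmat, one_apply, Prod.ext_iff, Fin.ext_iff, hs2c']

set_option maxHeartbeats 4000000 in
lemma key (x y : ℝ) :
    ptranspose3 (rhoGS x y) = Vmat * diagonal (fun i => ((dvec x y i : ℝ) : ℂ)) * Vmat := by
  have hVD : ∀ v a : Q3, (Vmat * diagonal (fun i => ((dvec x y i : ℝ) : ℂ))) v a
      = Vmat v a * ((dvec x y a : ℝ) : ℂ) := fun v a => Matrix.mul_diagonal _ _ _ _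
  ext ⟨i, j, k⟩ ⟨i', j', k'⟩
  fin_cases i <;> fin_cases j <;> fin_cases k <;> fin_cases i' <;> fin_cases j' <;> fin_cases k' <;>
  · rw [mul_apply, Fintype.sum_prod_type]
    simp only [Fintype.sum_prod_type, Fin.sum_univ_two, hVD]
    norm_num [Vmat, dvec, ptranspose3, rhoGS, GHZp, GHZm, vecMulVec_apply,
      one_apply, Pi.star_apply, Complex.star_def, Complex.conj_ofReal, smul_eq_mul,
      Prod.ext_iff, Fin.ext_iff, hs2c', hs2sq]
    try (push_cast; ring)
    try (simp only [hs2sq]; push_cast; ring)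

lemma herm (x y : ℝ) : (ptranspose3 (rhoGS x y)).IsHermitian := by
  rw [key x y]
  have hD : (diagonal (fun i => ((dvec x y i : ℝ) : ℂ))).conjTranspose
      = diagonal (fun i => ((dvec x y i : ℝ) : ℂ)) := by
    simp [diagonal_conjTranspose, Complex.star_def, Complex.conj_ofReal]
  have hV : Vmat.conjTranspose = Vmat := by
    ext v w
    simp only [conjTranspose_apply, Vmat]
    by_cases h1 : v = (0,0,1) <;> by_cases h2 : w = (0,0,1) <;>
      by_cases h3 : v = (1,1,0) <;> by_cases h4 : w = (1,1,0) <;>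
      simp_all [eq_comm]
  unfold IsHermitian
  rw [conjTranspose_mul, conjTranspose_mul, hD, hV, Matrix.mul_assoc]

lemma mset (x y : ℝ) (h : (ptranspose3 (rhoGS x y)).IsHermitian) :
    Finset.univ.val.map h.eigenvalues = Finset.univ.val.map (dvec x y) := by
  have hU2 := h.eigenvectorUnitary.2
  set U := (h.eigenvectorUnitary : Matrix Q3 Q3 ℂ) with hUdef
  have hUs : star U * U = 1 := mem_unitaryGroup_iff'.mp hU2
  have hdiag : star U * ptranspose3 (rhoGS x y) * U = diagonal (RCLike.ofReal ∘ h.eigenvalues) := by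
    have := h.conjStarAlgAut_star_eigenvectorUnitary
    rwa [Unitary.conjStarAlgAut_star_apply] at this
  have hPQ : (star U * Vmat) * (Vmat * U) = 1 := by
    calc (star U * Vmat) * (Vmat * U) = star U * (Vmat * Vmat) * U := by
          simp only [Matrix.mul_assoc]
        _ = 1 := by rw [Vmat_mul_self, Matrix.mul_one, hUs]
  have hconj : (star U * Vmat) * diagonal (fun i => ((dvec x y i : ℝ) : ℂ)) * (Vmat * U)
      = diagonal (RCLike.ofReal ∘ h.eigenvalues) := by
    have hdiag' : star U * (Vmat * diagonal (fun i => ((dvec x y i : ℝ) : ℂ)) * Vmat) * U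
        = diagonal (RCLike.ofReal ∘ h.eigenvalues) := by
      rw [← key x y]; exact hdiag
    rw [← hdiag']; simp only [Matrix.mul_assoc]
  have hcp : (diagonal (RCLike.ofReal ∘ h.eigenvalues)).charpoly
      = (diagonal (fun i => ((dvec x y i : ℝ) : ℂ))).charpoly := by
    rw [← hconj, charpoly_conj' _ _ _ hPQ]
  rw [charpoly_diag', charpoly_diag'] at hcp
  have hroots : Finset.univ.val.map (fun i => ((h.eigenvalues i : ℝ) : ℂ))
      = Finset.univ.val.map (fun i => ((dvec x y i : ℝ) : ℂ)) :=
    roots_eq _ _ hcp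
  apply Multiset.map_injective Complex.ofReal_injective
  rw [Multiset.map_map, Multiset.map_map]
  exact hroots

lemma sum_trans {M : Type*} [AddCommMonoid M] (x y : ℝ)
    (h : (ptranspose3 (rhoGS x y)).IsHermitian) (G : ℝ → M) :
    ∑ i : Q3, G (h.eigenvalues i) = ∑ i : Q3, G (dvec x y i) := by
  rw [Finset.sum, Finset.sum, show (fun i => G (h.eigenvalues i)) = G ∘ h.eigenvalues from rfl,
    show (fun i => G (dvec x y i)) = G ∘ dvec x y from rfl,
    ← Multiset.map_map, ← Multiset.map_map, mset x y h]

lemma eig_mem (x y : ℝ) (h : (ptranspose3 (rhoGS x y)).IsHermitian) (v : Q3) :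
    ∃ i, h.eigenvalues i = dvec x y v := by
  have hm : dvec x y v ∈ Finset.univ.val.map (dvec x y) :=
    Multiset.mem_map_of_mem _ (Finset.mem_univ v)
  rw [← mset x y h] at hm
  obtain ⟨i, _, hi⟩ := Multiset.mem_map.mp hm
  exact ⟨i, hi⟩

lemma mem_eig (x y : ℝ) (h : (ptranspose3 (rhoGS x y)).IsHermitian) (i : Q3) :
    ∃ v, dvec x y v = h.eigenvalues i := by
  have hm : h.eigenvalues i ∈ Finset.univ.val.map h.eigenvalues :=
    Multiset.mem_map_of_mem _ (Finset.mem_univ i)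
  rw [mset x y h] at hm
  obtain ⟨v, _, hv⟩ := Multiset.mem_map.mp hm
  exact ⟨v, hv⟩

lemma dvec_001 (x y : ℝ) : dvec x y (0,0,1) = (Real.sqrt 3 - 4*y)/(8*Real.sqrt 3) + x := by
  norm_num [dvec, Prod.ext_iff, Fin.ext_iff]
lemma dvec_110 (x y : ℝ) : dvec x y (1,1,0) = (Real.sqrt 3 - 4*y)/(8*Real.sqrt 3) - x := by
  norm_num [dvec, Prod.ext_iff, Fin.ext_iff]


/-- for a GHZ-symmetric density matrix `ρ^GS(x,y)` (i.e. with
`y ≤ √3/4` and `|x| ≤ 1/8 + (√3/2)y`), its partial transpose `ρ^Γ` with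
respect to the third qubit is positive semidefinite iff
`|x| + y/(2√3) ≤ 1/8`; moreover `ρ^Γ` is Hermitian with at most one negative
eigenvalue, and the sum of the absolute values of its negative eigenvalues
(the negativity) equals `max{0, |x| + y/(2√3) − 1/8}`. -/
theorem rhoGS_partial_transpose_negativity (x y : ℝ)
    (hy : y ≤ Real.sqrt 3 / 4) (hx : |x| ≤ 1 / 8 + Real.sqrt 3 / 2 * y) :
    ((ptranspose3 (rhoGS x y)).PosSemidef ↔
      |x| + y / (2 * Real.sqrt 3) ≤ 1 / 8) ∧
    ∃ h : (ptranspose3 (rhoGS x y)).IsHermitian,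
      (Finset.univ.filter (fun i : Q3 => h.eigenvalues i < 0)).card ≤ 1 ∧
      ∑ i ∈ Finset.univ.filter (fun i : Q3 => h.eigenvalues i < 0),
          |h.eigenvalues i| =
        max 0 (|x| + y / (2 * Real.sqrt 3) - 1 / 8) := by
  have hs3 : Real.sqrt 3 * Real.sqrt 3 = 3 := Real.mul_self_sqrt (by norm_num)
  have hs3pos : (0:ℝ) < Real.sqrt 3 := Real.sqrt_pos.mpr (by norm_num)
  have hcc : (Real.sqrt 3 - 4*y)/(8*Real.sqrt 3) = 1/8 - y/(2*Real.sqrt 3) := by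
    field_simp
    ring
  have hy' : y/(2*Real.sqrt 3) ≤ 1/8 := by
    rw [div_le_iff₀ (by positivity)]
    nlinarith [hs3]
  have hc0 : 0 ≤ (Real.sqrt 3 - 4*y)/(8*Real.sqrt 3) := by rw [hcc]; linarith
  have heE : (Real.sqrt 3 - 4*y)/(8*Real.sqrt 3) + 2*y/Real.sqrt 3 = 1/8 + Real.sqrt 3/2*y := by
    field_simp
    linear_combination (-8*y)*hs3
  have he0 : 0 ≤ (Real.sqrt 3 - 4*y)/(8*Real.sqrt 3) + 2*y/Real.sqrt 3 := by
    rw [heE]; linarith [abs_nonneg x]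
  have h := herm x y
  constructor
  · constructor
    · intro hPSD
      have hnn : ∀ i, 0 ≤ h.eigenvalues i := fun i => hPSD.eigenvalues_nonneg i
      obtain ⟨i1, hi1⟩ := eig_mem x y h (0,0,1)
      obtain ⟨i2, hi2⟩ := eig_mem x y h (1,1,0)
      rw [dvec_001] at hi1
      rw [dvec_110] at hi2
      have h1 := hnn i1
      have h2 := hnn i2
      rw [hi1] at h1
      rw [hi2] at h2
      have habs : |x| ≤ (Real.sqrt 3 - 4*y)/(8*Real.sqrt 3) := abs_le.mpr ⟨by linarith, by linarith⟩
      rw [hcc] at habs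
      linarith
    · intro hcond
      apply h.posSemidef_iff_eigenvalues_nonneg.mpr
      intro i
      obtain ⟨v, hv⟩ := mem_eig x y h i
      rw [← hv]
      have habs : |x| ≤ (Real.sqrt 3 - 4*y)/(8*Real.sqrt 3) := by rw [hcc]; linarith
      obtain ⟨hxl, hxr⟩ := abs_le.mp habs
      obtain ⟨a, b, k⟩ := v
      fin_cases a <;> fin_cases b <;> fin_cases k <;>
        norm_num [dvec, Prod.ext_iff, Fin.ext_iff] <;> linarith
  · refine ⟨h, ?_, ?_⟩
    · rw [Finset.card_filter]
      have := sum_trans x y h (fun r : ℝ => if r < 0 then (1:ℕ) else 0)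
      rw [this, Fintype.sum_prod_type]
      simp only [Fintype.sum_prod_type, Fin.sum_univ_two]
      norm_num [dvec, Prod.ext_iff, Fin.ext_iff]
      rw [if_neg (not_lt.mpr he0), if_neg (not_lt.mpr hc0)]
      split_ifs with h1 h2 <;> norm_num <;> linarith
    · rw [Finset.sum_filter]
      have := sum_trans x y h (fun r : ℝ => if r < 0 then |r| else 0)
      rw [this, Fintype.sum_prod_type]
      simp only [Fintype.sum_prod_type, Fin.sum_univ_two]
      norm_num [dvec, Prod.ext_iff, Fin.ext_iff]
      rw [if_neg (not_lt.mpr he0), if_neg (not_lt.mpr hc0)]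
      rcases le_or_gt (|x|) ((Real.sqrt 3 - 4*y)/(8*Real.sqrt 3)) with hle | hgt
      · obtain ⟨hxl, hxr⟩ := abs_le.mp hle
        rw [if_neg (by linarith), if_neg (by linarith), max_eq_left (by linarith [hcc])]
        ring
      · rcases abs_cases x with ⟨hax, hx0⟩ | ⟨hax, hx0⟩
        · rw [if_neg (by linarith), if_pos (by linarith),
            max_eq_right (by linarith [hcc]), abs_of_neg (by linarith)]
          linarith [hcc]
        · rw [if_pos (by linarith), if_neg (by linarith),
            max_eq_right (by linarith [hcc]), abs_of_neg (by linarith)]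
          linarith [hcc]
end
end

section
/- Fix real x, y, ϑ and set d = 1/4 − y/√3 and, for real θ, λ, c(θ,λ) = x sinθ (cosλ − i cosϑ sinλ). Then for all θ, λ one has 2·max{0, |c(θ,λ)| − d} ≤ 2·max{0, |x| + y/√3 − 1/4}, with equality at θ = π/2, λ = 0; hence the supremum over all θ, λ of 2·max{0, |c(θ,λ)| − d} equals 2·max{0, |x| + y/√3 − 1/4}. -/
noncomputable section

/-- with `d = 1/4 − y/√3` and
`c(θ,λ) = x sinθ (cosλ − i cosϑ sinλ)`, the concurrence
`2·max{0, |c(θ,λ)| − d}` of the localized X-shaped two-qubit state is bounded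
by `2·max{0, |x| + y/√3 − 1/4}` for all measurement angles, with equality at
`θ = π/2, λ = 0`; hence its supremum over all `θ, λ` equals
`2·max{0, |x| + y/√3 − 1/4}`, the localizable concurrence of `ρ^GS(x,y)`. -/
theorem localizable_concurrence_of_GHZ_symmetric (x y ϑ : ℝ) :
    let d : ℝ := 1 / 4 - y / Real.sqrt 3
    let c : ℝ → ℝ → ℂ := fun θ lam =>
      (x : ℂ) * (Real.sin θ : ℝ) *
        ((Real.cos lam : ℝ) - Complex.I * (Real.cos ϑ : ℝ) * (Real.sin lam : ℝ))
    (∀ θ lam : ℝ,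
      2 * max 0 (‖c θ lam‖ - d) ≤
        2 * max 0 (|x| + y / Real.sqrt 3 - 1 / 4)) ∧
    2 * max 0 (‖c (Real.pi / 2) 0‖ - d) =
      2 * max 0 (|x| + y / Real.sqrt 3 - 1 / 4) ∧
    IsGreatest {z : ℝ | ∃ θ lam : ℝ, z = 2 * max 0 (‖c θ lam‖ - d)}
      (2 * max 0 (|x| + y / Real.sqrt 3 - 1 / 4)) := by
  intro d c
  have hdx : |x| - d = |x| + y / Real.sqrt 3 - 1 / 4 := by simp [d]; ring
  have habs : ∀ θ lam : ℝ, ‖c θ lam‖ ≤ |x| := by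
    intro θ lam
    have h1 : ‖(Real.cos lam : ℂ) -
        Complex.I * (Real.cos ϑ : ℝ) * (Real.sin lam : ℝ)‖ ≤ 1 := by
      rw [Complex.norm_def, Complex.normSq_apply]
      simp only [Complex.sub_re, Complex.sub_im, Complex.mul_re, Complex.mul_im,
        Complex.I_re, Complex.I_im, Complex.ofReal_re, Complex.ofReal_im]
      ring_nf
      rw [show (1:ℝ) = Real.sqrt 1 by simp]
      apply Real.sqrt_le_sqrt
      nlinarith [Real.sin_sq_add_cos_sq lam, Real.cos_sq_le_one ϑ,
        sq_nonneg (Real.sin lam)]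
    calc ‖c θ lam‖
        = |x| * |Real.sin θ| * ‖(Real.cos lam : ℂ) -
            Complex.I * (Real.cos ϑ : ℝ) * (Real.sin lam : ℝ)‖ := by
          rw [show c θ lam = (x : ℂ) * (Real.sin θ : ℝ) *
            ((Real.cos lam : ℝ) - Complex.I * (Real.cos ϑ : ℝ) * (Real.sin lam : ℝ)) from rfl,
            norm_mul, norm_mul, Complex.norm_real, Complex.norm_real, Real.norm_eq_abs, Real.norm_eq_abs]
      _ ≤ |x| * 1 * 1 := by
          apply mul_le_mul _ h1 (norm_nonneg _) (by positivity)
          exact mul_le_mul_of_nonneg_left (abs_le_one_iff_mul_self_le_one.mpr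
            (by nlinarith [Real.sin_sq_add_cos_sq θ, sq_nonneg (Real.cos θ)])) (abs_nonneg x)
      _ = |x| := by ring
  have hub : ∀ θ lam : ℝ,
      2 * max 0 (‖c θ lam‖ - d) ≤
        2 * max 0 (|x| + y / Real.sqrt 3 - 1 / 4) := by
    intro θ lam
    have := habs θ lam
    rw [← hdx]
    have h2 : max 0 (‖c θ lam‖ - d) ≤ max 0 (|x| - d) :=
      max_le_max le_rfl (by linarith)
    linarith
  have heq : 2 * max 0 (‖c (Real.pi / 2) 0‖ - d) =
      2 * max 0 (|x| + y / Real.sqrt 3 - 1 / 4) := by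
    have : ‖c (Real.pi / 2) 0‖ = |x| := by
      rw [show c (Real.pi / 2) 0 = (x:ℂ) by
        simp only [c]; norm_num [Real.sin_pi_div_two]]
      rw [Complex.norm_real, Real.norm_eq_abs]
    rw [this, hdx]
  refine ⟨hub, heq, ⟨⟨Real.pi / 2, 0, heq.symm⟩, ?_⟩⟩
  rintro z ⟨θ, lam, rfl⟩
  exact hub θ lam
end
end
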